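/- arXiv:1810.09266 — 3 statements merged into one kernel-verified Lean document; each statement's English description precedes it below -/
import Mathlib

section
/- Let X be a set and let f_n : X → [0,∞), n ∈ ℕ, be a sequence of non-negative functions on X such that there exist constants α, β, C > 0 with ∑_{n=1}^∞ f_n(x) · R^{αn+β} e^{-αR} / (n!^α · n^{β−α/2+1/2}) ≤ C for every x ∈ X and every R > 0. Then there exists B > 0 such that (1/m) ∑_{n=1}^m f_n(x) ≤ B for every x ∈ X and every m ∈ ℕ. -/
open Filter

lemma log_factorial_le (n : ℕ) (hn : 1 ≤ n) :
    Real.log (Nat.factorial n) ≤ 1 + (1/2) * Real.log n + n * Real.log n - n := by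
  obtain ⟨k, rfl⟩ := Nat.exists_eq_add_of_le hn
  have hN : (0:ℝ) < (1 + k : ℕ) := by positivity
  have hmono := Stirling.log_stirlingSeq'_antitone (Nat.zero_le k)
  simp only [Function.comp] at hmono
  have hform := Stirling.log_stirlingSeq_formula (1 + k)
  have h1 : Real.log (Stirling.stirlingSeq 1) = 1 - (1/2) * Real.log 2 := by
    rw [Stirling.stirlingSeq_one, Real.log_div (by positivity) (by positivity),
      Real.log_exp, Real.log_sqrt (by norm_num)]
    ring
  have hks : Nat.succ k = 1 + k := by omega
  rw [hks] at hmono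
  have h2 : Real.log (2 * (1 + k : ℕ)) = Real.log 2 + Real.log (1 + k : ℕ) :=
    Real.log_mul (by norm_num) (by positivity)
  have h3 : Real.log ((1 + k : ℕ) / Real.exp 1) = Real.log (1 + k : ℕ) - 1 := by
    rw [Real.log_div (by positivity) (by positivity), Real.log_exp]
  rw [h1] at hmono
  rw [h2, h3] at hform
  nlinarith [hform, hmono]

lemma core_weight {α β : ℝ} (hα : 0 < α) (hβ : 0 < β) (n m : ℕ) (hn : 1 ≤ n) (hnm : n ≤ m)
    (hδ : ((m:ℝ) - n)^2 ≤ m) :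
    Real.exp (-(2*α)) / Real.sqrt m ≤
      ((m:ℝ) ^ (α * n + β) * Real.exp (-α * m)) /
        ((Nat.factorial n : ℝ) ^ α * (n:ℝ) ^ (β - α/2 + 1/2)) := by
  have hN : (0:ℝ) < (n:ℝ) := by exact_mod_cast hn
  have hN1 : (1:ℝ) ≤ (n:ℝ) := by exact_mod_cast hn
  have hM : (0:ℝ) < (m:ℝ) := lt_of_lt_of_le hN (by exact_mod_cast hnm)
  have hNM : (n:ℝ) ≤ (m:ℝ) := by exact_mod_cast hnm
  have hF : (0:ℝ) < (Nat.factorial n : ℝ) := by exact_mod_cast n.factorial_pos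
  have hLpos : (0:ℝ) < Real.exp (-(2*α)) / Real.sqrt m := by positivity
  have hRpos : (0:ℝ) < ((m:ℝ) ^ (α * n + β) * Real.exp (-α * m)) /
      ((Nat.factorial n : ℝ) ^ α * (n:ℝ) ^ (β - α/2 + 1/2)) := by positivity
  rw [← Real.log_le_log_iff hLpos hRpos]
  rw [Real.log_div (by positivity) (by positivity),
    Real.log_div (by positivity) (by positivity),
    Real.log_mul (by positivity) (by positivity),
    Real.log_mul (by positivity) (by positivity),
    Real.log_exp, Real.log_exp, Real.log_sqrt hM.le,
    Real.log_rpow hM, Real.log_rpow hF, Real.log_rpow hN]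
  set L1 := Real.log (m:ℝ) with hL1
  set L2 := Real.log (n:ℝ) with hL2
  have hFle := log_factorial_le n hn
  have hlogle : L2 ≤ L1 := Real.log_le_log hN hNM
  have hquot : ((n:ℝ)/(m:ℝ)) - 1 ≥ Real.log ((n:ℝ)/(m:ℝ)) :=
    Real.log_le_sub_one_of_pos (by positivity)
  have hlogdiff : L1 - L2 ≥ ((m:ℝ) - n) / m := by
    rw [Real.log_div (ne_of_gt hN) (ne_of_gt hM)] at hquot
    have : ((m:ℝ) - n)/m = 1 - (n:ℝ)/m := by field_simp
    rw [this]
    linarith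
  have hprod : (n:ℝ) * (((m:ℝ) - n) / m) ≥ ((m:ℝ) - n) - 1 := by
    rw [ge_iff_le, mul_div_assoc', le_div_iff₀ hM]
    nlinarith [hδ]
  have hA : α * ((n:ℝ) * (L1 - L2)) ≥ α * (((m:ℝ) - n) - 1) := by
    have h1 : (n:ℝ) * (L1 - L2) ≥ (n:ℝ) * (((m:ℝ) - n)/m) :=
      mul_le_mul_of_nonneg_left hlogdiff hN.le
    nlinarith
  have hB : β * (L1 - L2) ≥ 0 := mul_nonneg hβ.le (by linarith)
  have hFle' : α * Real.log (Nat.factorial n) ≤ α * (1 + (1/2) * L2 + n * L2 - n) :=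
    mul_le_mul_of_nonneg_left hFle hα.le
  nlinarith [hA, hB, hFle', hlogle, hα.le]

/-- Lemma `keyl`. -/
theorem stmt0 {X : Type*} (f : ℕ → X → ℝ) (hpos : ∀ n x, 0 ≤ f n x)
    (α β C : ℝ) (hα : 0 < α) (hβ : 0 < β) (hC : 0 < C)
    (hsummable : ∀ x : X, ∀ R : ℝ, 0 < R →
      Summable (fun n : ℕ => f (n + 1) x *
        (R ^ (α * (n + 1) + β) * Real.exp (-α * R)) /
        ((Nat.factorial (n + 1) : ℝ) ^ α * ((n : ℝ) + 1) ^ (β - α / 2 + 1 / 2))))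
    (hsum : ∀ x : X, ∀ R : ℝ, 0 < R →
      (∑' n : ℕ, f (n + 1) x *
        (R ^ (α * (n + 1) + β) * Real.exp (-α * R)) /
        ((Nat.factorial (n + 1) : ℝ) ^ α * ((n : ℝ) + 1) ^ (β - α / 2 + 1 / 2))) ≤ C) :
    ∃ B : ℝ, 0 < B ∧ ∀ x : X, ∀ m : ℕ,
      (1 / (m : ℝ)) * ∑ n ∈ Finset.Icc 1 m, f n x ≤ B := by
  set K : ℝ := C * Real.exp (2 * α) with hK
  have hKpos : 0 < K := by positivity
  -- block estimate
  have block : ∀ x : X, ∀ m : ℕ, 1 ≤ m →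
      ∑ n ∈ Finset.Ioc (m - Nat.sqrt m - 1) m, f n x ≤ K * Real.sqrt m := by
    intro x m hm
    have hMpos : (0:ℝ) < (m:ℝ) := by exact_mod_cast hm
    have hsqpos : (0:ℝ) < Real.sqrt m := Real.sqrt_pos.mpr hMpos
    set j := m - Nat.sqrt m - 1 with hj
    set g : ℕ → ℝ := fun i => f (i + 1) x *
        (((m:ℝ)) ^ (α * (i + 1) + β) * Real.exp (-α * (m:ℝ))) /
        ((Nat.factorial (i + 1) : ℝ) ^ α * ((i : ℝ) + 1) ^ (β - α / 2 + 1 / 2)) with hg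
    have hg0 : ∀ i, 0 ≤ g i := by
      intro i
      apply div_nonneg (mul_nonneg (hpos _ x) (by positivity)) (by positivity)
    have hgsummable : Summable g := hsummable x (m:ℝ) hMpos
    have hgsum : (∑' i, g i) ≤ C := hsum x (m:ℝ) hMpos
    set w : ℝ := Real.exp (-(2*α)) / Real.sqrt m with hw
    have hwpos : 0 < w := by positivity
    have hterm : ∀ i ∈ Finset.Ico j m, f (i+1) x * w ≤ g i := by
      intro i hi
      rw [Finset.mem_Ico] at hi
      have hi1m : i + 1 ≤ m := hi.2
      have hd : m - (i+1) ≤ Nat.sqrt m := by omega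
      have hδ : ((m:ℝ) - ((i:ℝ)+1))^2 ≤ m := by
        have hc : (m:ℝ) - ((i:ℝ)+1) = ((m - (i+1) : ℕ) : ℝ) := by
          push_cast [Nat.cast_sub hi1m]; ring
        have hs2 : ((Nat.sqrt m : ℕ) : ℝ)^2 ≤ (m:ℝ) := by exact_mod_cast Nat.sqrt_le' m
        rw [hc]
        calc ((m - (i+1) : ℕ) : ℝ)^2 ≤ ((Nat.sqrt m : ℕ) : ℝ)^2 := by
              apply pow_le_pow_left₀ (by positivity)
              exact_mod_cast hd
          _ ≤ (m:ℝ) := hs2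
      have hcw := core_weight hα hβ (i+1) m (by omega) hi1m (by push_cast; push_cast at hδ; exact hδ)
      have : f (i+1) x * w ≤ f (i+1) x * (((m:ℝ)) ^ (α * ((i:ℝ)+1) + β) * Real.exp (-α * (m:ℝ)) /
          ((Nat.factorial (i + 1) : ℝ) ^ α * ((i : ℝ) + 1) ^ (β - α / 2 + 1 / 2))) := by
        apply mul_le_mul_of_nonneg_left _ (hpos _ x)
        rw [hw]
        convert hcw using 3 <;> push_cast <;> rfl
      calc f (i+1) x * w ≤ _ := this
        _ = g i := by rw [hg]; ring
    have hsum1 : ∑ i ∈ Finset.Ico j m, f (i+1) x * w ≤ ∑ i ∈ Finset.Ico j m, g i :=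
      Finset.sum_le_sum hterm
    have hsum2 : ∑ i ∈ Finset.Ico j m, g i ≤ ∑' i, g i :=
      Summable.sum_le_tsum _ (fun i _ => hg0 i) hgsummable
    have hsum3 : (∑ i ∈ Finset.Ico j m, f (i+1) x) * w ≤ C := by
      rw [Finset.sum_mul]
      exact le_trans (le_of_eq rfl) (le_trans hsum1 (le_trans hsum2 hgsum))
    have hsum4 : ∑ i ∈ Finset.Ico j m, f (i+1) x ≤ C / w := by
      rw [le_div_iff₀ hwpos]; exact hsum3
    have hCw : C / w = K * Real.sqrt m := by
      rw [hw, hK, Real.exp_neg]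
      field_simp
    -- reindex
    have hre : ∑ n ∈ Finset.Ioc j m, f n x = ∑ i ∈ Finset.Ico j m, f (i+1) x := by
      have : Finset.Ioc j m = (Finset.Ico j m).map (addRightEmbedding 1) := by
        rw [Finset.map_add_right_Ico]
        ext t
        simp [Nat.lt_succ_iff]
      rw [this, Finset.sum_map]
      rfl
    rw [hre, ← hCw]
    exact hsum4
  -- main induction
  have main : ∀ x : X, ∀ m : ℕ, ∑ n ∈ Finset.Icc 1 m, f n x ≤ K * m := by
    intro x m
    induction m using Nat.strong_induction_on with
    | _ m ih =>
      rcases Nat.eq_zero_or_pos m with rfl | hm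
      · simp
      · set j := m - Nat.sqrt m - 1 with hj
        have hjm : j ≤ m := by omega
        have hjlt : j < m := by omega
        have hsplit : ∑ n ∈ Finset.Ioc 0 j, f n x + ∑ n ∈ Finset.Ioc j m, f n x
            = ∑ n ∈ Finset.Ioc 0 m, f n x :=
          Finset.sum_Ioc_consecutive _ (Nat.zero_le j) hjm
        have hIcc : ∀ k : ℕ, Finset.Icc 1 k = Finset.Ioc 0 k := by
          intro k; ext t; simp; omega
        have hIH : ∑ n ∈ Finset.Ioc 0 j, f n x ≤ K * j := by
          rw [← hIcc]; exact ih j hjlt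
        have hblk : ∑ n ∈ Finset.Ioc j m, f n x ≤ K * Real.sqrt m := block x m hm
        have hsq : Real.sqrt m ≤ (m:ℝ) - (j:ℝ) := by
          rcases le_or_gt (Nat.sqrt m + 1) m with h | h
          · have hmj : (m:ℝ) - (j:ℝ) = ((Nat.sqrt m : ℕ):ℝ) + 1 := by
              have : m - j = Nat.sqrt m + 1 := by omega
              have hcast : ((m - j : ℕ):ℝ) = (m:ℝ) - (j:ℝ) := Nat.cast_sub hjm
              rw [← hcast, this]; push_cast; ring
            rw [hmj]
            exact Real.real_sqrt_le_nat_sqrt_succ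
          · -- m ≤ Nat.sqrt m, so m = 1
            have hs2 : (Nat.sqrt m)^2 ≤ m := Nat.sqrt_le' m
            have hm1 : m = 1 := by nlinarith [hm, h, hs2]
            subst hm1
            simp [hj]
        have : K * j + K * Real.sqrt m ≤ K * m := by
          have h1 : K * Real.sqrt m ≤ K * ((m:ℝ) - j) :=
            mul_le_mul_of_nonneg_left hsq hKpos.le
          nlinarith
        rw [hIcc, ← hsplit]
        linarith
  refine ⟨K, hKpos, fun x m => ?_⟩
  rcases Nat.eq_zero_or_pos m with rfl | hm
  · simp [hKpos.le]
  · have hMpos : (0:ℝ) < (m:ℝ) := by exact_mod_cast hm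
    have := main x m
    rw [one_div, inv_mul_le_iff₀ hMpos]
    linarith [this]
end

section
/- For any function φ : (0,∞) → (0,∞) with φ(r) → ∞ as r → ∞, there exists an entire function f : ℂ → ℂ that is a distributionally irregular vector for the differentiation operator D : f ↦ f′ on the space H(ℂ) of entire functions, and that satisfies M_∞(f, r) ≤ φ(r) · e^r for all sufficiently large r > 0. -/
set_option maxHeartbeats 1000000

open Filter

section DIAux
open Nat

/-- Upper density of a set of natural numbers. -/
noncomputable def udens (A : Set ℕ) : ℝ :=
  Filter.limsup (fun n : ℕ => ((A ∩ Set.Icc 1 n).ncard : ℝ) / n) Filter.atTop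

lemma udens_le_one_aux (A : Set ℕ) (n : ℕ) :
    ((A ∩ Set.Icc 1 n).ncard : ℝ) / n ≤ 1 := by
  rcases Nat.eq_zero_or_pos n with h | h
  · simp [h]
  · rw [div_le_one (by exact_mod_cast h)]
    have h1 : (A ∩ Set.Icc 1 n).ncard ≤ (Set.Icc 1 n).ncard :=
      Set.ncard_le_ncard Set.inter_subset_right (Set.finite_Icc _ _)
    have h2 : (Set.Icc 1 n).ncard = n := by
      rw [← Finset.coe_Icc, Set.ncard_coe_finset, Nat.card_Icc]; omega
    exact_mod_cast h1.trans_eq h2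

lemma udens_ratio_nonneg (A : Set ℕ) (n : ℕ) :
    0 ≤ ((A ∩ Set.Icc 1 n).ncard : ℝ) / n := by positivity

lemma udens_eq_one (A : Set ℕ)
    (h : ∀ K N : ℕ, ∃ m n : ℕ, N ≤ n ∧ 1 ≤ m ∧ (K + 1) * m ≤ n ∧ Set.Icc m n ⊆ A) :
    udens A = 1 := by
  have hb : IsBoundedUnder (· ≤ ·) atTop (fun n : ℕ => ((A ∩ Set.Icc 1 n).ncard : ℝ) / n) :=
    isBoundedUnder_of ⟨1, fun n => udens_le_one_aux A n⟩
  have hcb : IsCoboundedUnder (· ≤ ·) atTop (fun n : ℕ => ((A ∩ Set.Icc 1 n).ncard : ℝ) / n) :=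
    IsBoundedUnder.isCoboundedUnder_le (isBoundedUnder_of ⟨0, fun n => udens_ratio_nonneg A n⟩)
  apply le_antisymm
  · exact Filter.limsup_le_of_le hcb (Eventually.of_forall (udens_le_one_aux A))
  · have key : ∀ K : ℕ, 1 - 1/(K+1 : ℝ) ≤ udens A := by
      intro K
      apply le_limsup_of_frequently_le _ hb
      rw [frequently_atTop]
      intro N
      obtain ⟨m, n, hn, hm, hKm, hsub⟩ := h K N
      refine ⟨n, hn, ?_⟩
      have hmn : m ≤ n := le_trans (by nlinarith) hKm
      have hn0 : 0 < n := lt_of_lt_of_le hm hmn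
      have hcard : (n + 1 - m : ℕ) ≤ (A ∩ Set.Icc 1 n).ncard := by
        have hsub2 : Set.Icc m n ⊆ A ∩ Set.Icc 1 n := fun x hx =>
          ⟨hsub hx, le_trans hm hx.1, hx.2⟩
        have : (Set.Icc m n).ncard = n + 1 - m := by
          rw [← Finset.coe_Icc, Set.ncard_coe_finset, Nat.card_Icc]
        exact this ▸ Set.ncard_le_ncard hsub2 ((Set.finite_Icc 1 n).inter_of_right A)
      have hcard' : (n : ℝ) - m ≤ ((A ∩ Set.Icc 1 n).ncard : ℝ) := by
        have h1 : ((n + 1 - m : ℕ) : ℝ) ≤ ((A ∩ Set.Icc 1 n).ncard : ℝ) := by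
          exact_mod_cast hcard
        have h2 : ((n + 1 - m : ℕ) : ℝ) = (n : ℝ) + 1 - m := by
          have : m ≤ n + 1 := hmn.trans (Nat.le_succ n)
          push_cast [Nat.cast_sub this]; ring
        linarith [h2 ▸ h1]
      rw [le_div_iff₀ (by exact_mod_cast hn0 : (0:ℝ) < n)]
      have hmr : ((K:ℝ) + 1) * m ≤ n := by exact_mod_cast hKm
      have hK1 : (0:ℝ) < (K:ℝ) + 1 := by positivity
      have hmn' : (m:ℝ) ≤ (n:ℝ)/((K:ℝ)+1) := by
        rw [le_div_iff₀ hK1]; linarith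
      have hexp : (1 - 1/((K:ℝ)+1)) * n = n - n/((K:ℝ)+1) := by ring
      rw [hexp]
      have : (n:ℝ)/((K:ℝ)+1) ≥ (n:ℝ) - ((A ∩ Set.Icc 1 n).ncard : ℝ) := by linarith
      linarith
    have hlim : Tendsto (fun K : ℕ => 1 - 1/(K+1 : ℝ)) atTop (nhds 1) := by
      have : Tendsto (fun n : ℕ => 1 / ((n : ℝ) + 1)) atTop (nhds 0) :=
        tendsto_one_div_add_atTop_nhds_zero_nat
      simpa using (tendsto_const_nhds.sub this)
    exact le_of_tendsto hlim (Eventually.of_forall key)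


lemma exp_tsum (r : ℝ) : (∑' n : ℕ, r ^ n / n !) = Real.exp r := by
  rw [Real.exp_eq_exp_ℝ, NormedSpace.exp_eq_tsum_div]

lemma pow_div_factorial_le_exp (r : ℝ) (hr : 0 ≤ r) (i : ℕ) : r ^ i / i ! ≤ Real.exp r := by
  rw [← exp_tsum]
  exact Summable.le_tsum (Real.summable_pow_div_factorial r) i (fun j _ => by positivity)

lemma tail_term_le (r : ℝ) (hr : 1 ≤ r) (i : ℕ) (hi : 6 * r ≤ i) :
    r ^ i / i ! ≤ (1/2 : ℝ) ^ i := by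
  have hi0 : (0:ℝ) < i := by nlinarith
  have h1 : ((i:ℝ)) ^ i / i ! ≤ Real.exp i := pow_div_factorial_le_exp i (by positivity) i
  have hfac : (0:ℝ) < (i ! : ℝ) := by exact_mod_cast Nat.factorial_pos i
  have key : r ^ i / i ! = (r / i) ^ i * ((i:ℝ) ^ i / i !) := by
    rw [div_pow]; field_simp
  rw [key]
  have hexp : Real.exp i = Real.exp 1 ^ i := by
    rw [← Real.exp_nat_mul]; norm_num
  have h2 : (r / i) ^ i * ((i:ℝ) ^ i / i !) ≤ (r / i) ^ i * Real.exp 1 ^ i := by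
    apply mul_le_mul_of_nonneg_left (hexp ▸ h1) (by positivity)
  refine h2.trans ?_
  rw [← mul_pow]
  apply pow_le_pow_left₀ (by positivity)
  have he : Real.exp 1 ≤ 3 := by
    have := Real.exp_one_lt_d9; linarith
  rw [div_mul_eq_mul_div, div_le_iff₀ hi0]
  calc r * Real.exp 1 ≤ r * 3 := by nlinarith [Real.exp_pos 1]
    _ ≤ (1/2) * (6 * r) := by nlinarith
    _ ≤ (1/2) * i := by nlinarith

lemma summable_id_mul_half_pow : Summable (fun i : ℕ => (i:ℝ) * (1/2)^i) := by
  have h : ‖(1/2 : ℝ)‖ < 1 := by rw [Real.norm_eq_abs]; rw [abs_of_pos]; norm_num; norm_num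
  simpa using summable_pow_mul_geometric_of_norm_lt_one 1 h

lemma tsum_id_mul_half_pow : (∑' i : ℕ, (i:ℝ) * (1/2)^i) = 2 := by
  rw [tsum_coe_mul_geometric_of_norm_lt_one
    (by rw [Real.norm_eq_abs]; rw [abs_of_pos]; norm_num; norm_num : ‖(1/2:ℝ)‖ < 1)]
  norm_num



noncomputable def Qs (T : ℕ → ℝ) : ℕ → ℕ
  | 0 => 1
  | m + 1 => (m + 2) * (Qs T m + 1) + 6 * (Finset.range (m + 3)).sup (fun i => ⌈T i⌉₊)

variable (T : ℕ → ℝ)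

lemma Qs_succ (m : ℕ) :
    Qs T (m+1) = (m + 2) * (Qs T m + 1) + 6 * (Finset.range (m + 3)).sup (fun i => ⌈T i⌉₊) := rfl

lemma Qs_succ_ge (m : ℕ) : Qs T m + m + 2 ≤ Qs T (m+1) := by
  rw [Qs_succ]; nlinarith [Nat.zero_le ((Finset.range (m + 3)).sup (fun i => ⌈T i⌉₊))]

lemma Qs_mul_le (m : ℕ) : (m + 2) * (Qs T m + 1) ≤ Qs T (m+1) := by
  rw [Qs_succ]; omega

lemma Qs_T_le (m i : ℕ) (h : i ≤ m + 2) : 6 * ⌈T i⌉₊ ≤ Qs T (m+1) := by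
  rw [Qs_succ]
  have hm : i ∈ Finset.range (m + 3) := Finset.mem_range.mpr (by omega)
  have : ⌈T i⌉₊ ≤ (Finset.range (m + 3)).sup (fun i => ⌈T i⌉₊) :=
    Finset.le_sup (f := fun i => ⌈T i⌉₊) hm
  omega

lemma Qs_ge (m : ℕ) : m + 1 ≤ Qs T m := by
  induction m with
  | zero => simp [Qs]
  | succ n ih => have := Qs_succ_ge T n; omega

lemma Qs_strictMono : StrictMono (Qs T) :=
  strictMono_nat_of_lt_succ (fun n => by have := Qs_succ_ge T n; omega)

lemma Qs_mono : Monotone (Qs T) := (Qs_strictMono T).monotone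

open scoped Classical in
/-- the coefficient sequence -/
noncomputable def as (T : ℕ → ℝ) (j : ℕ) : ℕ :=
  if h : ∃ k, Qs T (2*k+1) ≤ j ∧ j < Qs T (2*k+2) then h.choose + 1 else 0

lemma as_eq (k j : ℕ) (h1 : Qs T (2*k+1) ≤ j) (h2 : j < Qs T (2*k+2)) : as T j = k + 1 := by
  have hex : ∃ k, Qs T (2*k+1) ≤ j ∧ j < Qs T (2*k+2) := ⟨k, h1, h2⟩
  rw [as, dif_pos hex]
  obtain ⟨h1', h2'⟩ := hex.choose_spec
  set k' := hex.choose
  rcases lt_trichotomy k k' with h | h | h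
  · exfalso
    have : Qs T (2*k+2) ≤ Qs T (2*k'+1) := Qs_mono T (by omega)
    omega
  · omega
  · exfalso
    have : Qs T (2*k'+2) ≤ Qs T (2*k+1) := Qs_mono T (by omega)
    omega

lemma as_eq_zero' (j : ℕ) (h : ∀ k, ¬(Qs T (2*k+1) ≤ j ∧ j < Qs T (2*k+2))) : as T j = 0 := by
  rw [as, dif_neg (by push_neg at h ⊢; intro k; have := h k; omega)]

lemma as_eq_zero (k j : ℕ) (h1 : Qs T (2*k) ≤ j) (h2 : j < Qs T (2*k+1)) : as T j = 0 := by
  apply as_eq_zero'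
  intro k'
  rintro ⟨g1, g2⟩
  rcases le_or_gt k k' with h | h
  · have : Qs T (2*k+1) ≤ Qs T (2*k'+1) := Qs_mono T (by omega)
    omega
  · have : Qs T (2*k'+2) ≤ Qs T (2*k) := Qs_mono T (by omega)
    omega

lemma as_block (j : ℕ) (h : as T j ≠ 0) :
    ∃ k, as T j = k + 1 ∧ Qs T (2*k+1) ≤ j ∧ j < Qs T (2*k+2) := by
  by_cases hex : ∃ k, Qs T (2*k+1) ≤ j ∧ j < Qs T (2*k+2)
  · obtain ⟨k, h1, h2⟩ := hex
    exact ⟨k, as_eq T k j h1 h2, h1, h2⟩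
  · push_neg at hex
    exact absurd (as_eq_zero' T j (by intro k; have := hex k; omega)) h

lemma as_le_self (j : ℕ) : as T j ≤ j := by
  by_cases h : as T j = 0
  · omega
  · obtain ⟨k, hk, h1, _⟩ := as_block T j h
    have := Qs_ge T (2*k+1)
    omega

lemma as_le_two_pow (j : ℕ) : as T j ≤ 2 ^ j := by
  have := as_le_self T j
  have := Nat.lt_two_pow_self (n := j)
  omega

lemma as_add_le (k n j : ℕ) (hn : n ≤ Qs T (2*k+1)) : as T (n+j) ≤ (k+1) + j := by
  by_cases h : as T (n+j) = 0
  · omega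
  · obtain ⟨k', hk', h1, _⟩ := as_block T (n+j) h
    rcases le_or_gt k' k with hle | hlt
    · omega
    · have e1 : Qs T (2*k+1) ≤ Qs T (2*k') := Qs_mono T (by omega)
      have e2 : Qs T (2*k') + 2*k' + 2 ≤ Qs T (2*k'+1) := Qs_succ_ge T (2*k')
      omega



/-- the entire function and its formal derivatives -/
noncomputable def Fs (T : ℕ → ℝ) (n : ℕ) (z : ℂ) : ℂ :=
  ∑' j : ℕ, (as T (n+j) : ℂ) * z ^ j / (j ! : ℂ)

lemma norm_term_le (n j : ℕ) (z : ℂ) :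
    ‖(as T (n+j) : ℂ) * z ^ j / (j ! : ℂ)‖ ≤ (2:ℝ)^n * ((2 * ‖z‖) ^ j / j !) := by
  have hfac : (0:ℝ) < (j ! : ℝ) := by exact_mod_cast Nat.factorial_pos j
  rw [norm_div, norm_mul, norm_pow]
  have h1 : ‖((as T (n+j) : ℕ) : ℂ)‖ = (as T (n+j) : ℝ) := by
    rw [Complex.norm_natCast]
  have h2 : ‖((j ! : ℕ) : ℂ)‖ = (j ! : ℝ) := by
    rw [Complex.norm_natCast]
  rw [h1, h2]
  rw [div_le_iff₀ hfac]
  have h3 : (as T (n+j) : ℝ) ≤ 2^(n+j) := by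
    exact_mod_cast as_le_two_pow T (n+j)
  have h4 : (2:ℝ)^n * ((2 * ‖z‖) ^ j / j !) * j ! = 2^(n+j) * ‖z‖^j := by
    field_simp [pow_add, mul_pow]; ring
  rw [h4]
  apply mul_le_mul_of_nonneg_right h3 (by positivity)

lemma summable_norm_Fs (n : ℕ) (z : ℂ) :
    Summable (fun j : ℕ => ‖(as T (n+j) : ℂ) * z ^ j / (j ! : ℂ)‖) := by
  apply Summable.of_nonneg_of_le (fun j => norm_nonneg _) (fun j => norm_term_le T n j z)
  exact (Real.summable_pow_div_factorial (2 * ‖z‖)).mul_left _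

lemma summable_Fs (n : ℕ) (z : ℂ) :
    Summable (fun j : ℕ => (as T (n+j) : ℂ) * z ^ j / (j ! : ℂ)) :=
  (summable_norm_Fs T n z).of_norm

lemma hasDerivAt_Fs (n : ℕ) (z : ℂ) : HasDerivAt (Fs T n) (Fs T (n+1) z) z := by
  set R : ℝ := ‖z‖ + 1 with hR
  have hR1 : (1:ℝ) ≤ R := by have := norm_nonneg z; simp only [hR]; linarith
  set g : ℕ → ℂ → ℂ := fun j y => (as T (n+j) : ℂ) * y ^ j / (j ! : ℂ) with hg
  set g' : ℕ → ℂ → ℂ := fun j y => (as T (n+j) : ℂ) * ((j:ℂ) * y ^ (j-1)) / (j ! : ℂ) with hg'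
  set u : ℕ → ℝ := fun j => (2:ℝ)^n * ((4 * R) ^ j / j !) with hu
  have hu_sum : Summable u := (Real.summable_pow_div_factorial (4 * R)).mul_left _
  have hderiv : ∀ j y, y ∈ Metric.ball (0:ℂ) R → HasDerivAt (g j) (g' j y) y := by
    intro j y _
    simpa [hg, hg'] using (((hasDerivAt_pow j y).const_mul
      ((as T (n+j) : ℂ))).div_const ((j ! : ℂ)))
  have hbound : ∀ j y, y ∈ Metric.ball (0:ℂ) R → ‖g' j y‖ ≤ u j := by
    intro j y hy
    rw [mem_ball_zero_iff] at hy
    have hyR : ‖y‖ ≤ R := hy.le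
    have hfac : (0:ℝ) < (j ! : ℝ) := by exact_mod_cast Nat.factorial_pos j
    rw [hg']
    simp only []
    rw [norm_div, norm_mul, norm_mul, norm_pow, Complex.norm_natCast, Complex.norm_natCast,
      Complex.norm_natCast]
    rw [div_le_iff₀ hfac, hu]
    have h1 : (as T (n+j) : ℝ) ≤ 2^n * 2^j := by
      have := as_le_two_pow T (n+j)
      have : ((as T (n+j) : ℕ) : ℝ) ≤ ((2^(n+j) : ℕ) : ℝ) := by exact_mod_cast this
      simpa [pow_add] using this
    have h2 : (j : ℝ) ≤ 2^j := by exact_mod_cast (Nat.lt_two_pow_self (n := j)).le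
    have h3 : ‖y‖^(j-1) ≤ R^j := by
      calc ‖y‖^(j-1) ≤ R^(j-1) := pow_le_pow_left₀ (norm_nonneg y) hyR _
        _ ≤ R^j := pow_le_pow_right₀ hR1 (Nat.sub_le j 1)
    have h4 : (2:ℝ)^n * ((4 * R) ^ j / j !) * j ! = 2^n * (2^j * (2^j * R^j)) := by
      field_simp
      rw [mul_pow, mul_comm]
      ring_nf
      rw [show (4:ℝ) = 2 * 2 by norm_num, mul_pow]
      ring
    rw [h4]
    have e2 : (j:ℝ) * ‖y‖^(j-1) ≤ 2^j * R^j :=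
      mul_le_mul h2 h3 (by positivity) (by positivity)
    calc (as T (n+j) : ℝ) * ((j:ℝ) * ‖y‖^(j-1)) ≤ (2^n * 2^j) * (2^j * R^j) :=
          mul_le_mul h1 e2 (by positivity) (by positivity)
      _ = 2^n * (2^j * (2^j * R^j)) := by ring
  have hz : z ∈ Metric.ball (0:ℂ) R := by
    rw [mem_ball_zero_iff]; simp only [hR]; linarith
  have h0 : (0:ℂ) ∈ Metric.ball (0:ℂ) R := by
    rw [mem_ball_zero_iff]; simp only [norm_zero]; linarith
  have main : HasDerivAt (fun y => ∑' j, g j y) (∑' j, g' j z) z :=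
    hasDerivAt_tsum_of_isPreconnected hu_sum Metric.isOpen_ball
      (convex_ball (0:ℂ) R).isPreconnected hderiv hbound h0 (summable_Fs T n 0) hz
  have hgsum : Summable (fun j => g' j z) :=
    Summable.of_norm (Summable.of_nonneg_of_le (fun j => norm_nonneg _)
      (fun j => hbound j z hz) hu_sum)
  have hre : (∑' j, g' j z) = Fs T (n+1) z := by
    rw [Summable.tsum_eq_zero_add hgsum]
    have hzero : g' 0 z = 0 := by simp [hg']
    rw [hzero, zero_add, Fs]
    apply tsum_congr
    intro j
    rw [hg']
    simp only []
    have hfs : ((j+1)! : ℂ) = ((j:ℂ)+1) * (j ! : ℂ) := by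
      rw [Nat.factorial_succ]; push_cast; ring
    have hj1 : ((j:ℂ)+1) ≠ 0 := by
      intro hc
      have : ((j:ℂ)+1) = ((j+1 : ℕ) : ℂ) := by push_cast; ring
      rw [this] at hc
      exact_mod_cast hc
    have hfne : ((j ! : ℕ) : ℂ) ≠ 0 := by
      exact_mod_cast (Nat.factorial_pos j).ne'
    have harg : n + (j+1) = (n+1) + j := by omega
    rw [harg]
    rw [show ((j+1 : ℕ):ℂ) * z ^ (j+1-1) = ((j:ℂ)+1) * z ^ j by push_cast; simp]
    rw [hfs]
    field_simp
  rw [← hre]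
  exact main

lemma differentiable_Fs (n : ℕ) : Differentiable ℂ (Fs T n) :=
  fun z => (hasDerivAt_Fs T n z).differentiableAt

lemma iteratedDeriv_Fs (n : ℕ) : iteratedDeriv n (Fs T 0) = Fs T n := by
  induction n with
  | zero => simp [iteratedDeriv_zero]
  | succ n ih =>
    rw [iteratedDeriv_succ, ih]
    funext z
    exact (hasDerivAt_Fs T n z).deriv

lemma Fs_apply_zero (n : ℕ) : Fs T n 0 = (as T n : ℂ) := by
  rw [Fs, tsum_eq_single 0]
  · simp
  · intro j hj
    simp [zero_pow hj]

lemma norm_term (m j : ℕ) (z : ℂ) :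
    ‖(as T m : ℂ) * z ^ j / (j ! : ℂ)‖ = (as T m : ℝ) * ‖z‖^j / (j ! : ℝ) := by
  rw [norm_div, norm_mul, norm_pow, Complex.norm_natCast, Complex.norm_natCast]

lemma tendstoLU :
    TendstoLocallyUniformly (fun (n : ℕ) (z : ℂ) => Fs T n z) (fun _ => 0)
      (atTop ⊓ Filter.principal (⋃ k, Set.Icc (Qs T (2*k)) (Qs T (2*k+1) - (k+1)))) := by
  rw [Metric.tendstoLocallyUniformly_iff]
  intro ε hε x
  refine ⟨Metric.ball x 1, Metric.ball_mem_nhds x one_pos, ?_⟩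
  set R : ℝ := ‖x‖ + 1 with hRdef
  have hR0 : 0 ≤ R := by positivity
  set g : ℕ → ℝ := fun j => 2 * j * R^j / j ! with hgdef
  have hg_nonneg : ∀ j, 0 ≤ g j := fun j => by positivity
  have hg_sum : Summable g := by
    refine Summable.of_nonneg_of_le hg_nonneg (fun j => ?_)
      ((Real.summable_pow_div_factorial (2*R)).mul_left 2)
    · rw [hgdef, mul_pow]
      have h2 : (j : ℝ) ≤ 2^j := by exact_mod_cast (Nat.lt_two_pow_self (n := j)).le
      have hfac : (0:ℝ) < (j ! : ℝ) := by exact_mod_cast Nat.factorial_pos j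
      have key : (2:ℝ)*j*R^j ≤ 2*(2^j*R^j) := by nlinarith [pow_nonneg hR0 j]
      calc (2:ℝ)*j*R^j/j ! ≤ 2*(2^j*R^j)/j ! := by gcongr
        _ = 2*(2^j*R^j/j !) := by ring
  have htail : ∀ᶠ i in atTop, (∑' j, g (j + i)) < ε := by
    have h0 := tendsto_sum_nat_add g
    exact h0.eventually_lt_const hε
  obtain ⟨k₀, hk₀⟩ := eventually_atTop.mp htail
  rw [eventually_inf_principal]
  rw [eventually_atTop]
  refine ⟨Qs T (2*k₀), ?_⟩
  intro n hn hnA y hy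
  obtain ⟨s, ⟨k, rfl⟩, hs⟩ := hnA
  rw [Set.mem_Icc] at hs
  have hQk1 : k + 1 ≤ Qs T (2*k+1) := le_trans (by omega) (Qs_ge T (2*k+1))
  have hgap : n + (k+1) ≤ Qs T (2*k+1) := by omega
  have hkk0 : k₀ ≤ k := by
    by_contra hc
    push_neg at hc
    have : Qs T (2*k+1) < Qs T (2*k₀) := Qs_strictMono T (by omega)
    omega
  -- dist
  have hdist : dist ((fun _ : ℂ => (0:ℂ)) y) (Fs T n y) = ‖Fs T n y‖ := by
    simp [dist_eq_norm]
  rw [hdist]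
  have hyR : ‖y‖ ≤ R := by
    have : ‖y‖ ≤ ‖y - x‖ + ‖x‖ := by
      calc ‖y‖ = ‖(y - x) + x‖ := by ring_nf
        _ ≤ ‖y - x‖ + ‖x‖ := norm_add_le _ _
    have h2 : ‖y - x‖ < 1 := by
      rw [← dist_eq_norm]; exact Metric.mem_ball.mp hy
    rw [hRdef]; linarith
  -- split the series
  have hsummable := summable_Fs T n y
  rw [Fs, ← Summable.sum_add_tsum_nat_add (k+1) hsummable]
  have hzerosum : (∑ j ∈ Finset.range (k+1), (as T (n+j) : ℂ) * y ^ j / (j ! : ℂ)) = 0 := by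
    apply Finset.sum_eq_zero
    intro j hj
    rw [Finset.mem_range] at hj
    have : as T (n+j) = 0 := as_eq_zero T k (n+j) (by omega) (by omega)
    rw [this]
    simp
  rw [hzerosum, zero_add]
  have hnormsum : Summable (fun j => ‖(as T (n+(j+(k+1))) : ℂ) * y ^ (j+(k+1)) / ((j+(k+1))! : ℂ)‖) :=
    (summable_nat_add_iff (k+1)).mpr (summable_norm_Fs T n y)
  calc ‖∑' j, (as T (n+(j+(k+1))) : ℂ) * y ^ (j+(k+1)) / ((j+(k+1))! : ℂ)‖
      ≤ ∑' j, ‖(as T (n+(j+(k+1))) : ℂ) * y ^ (j+(k+1)) / ((j+(k+1))! : ℂ)‖ :=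
        norm_tsum_le_tsum_norm hnormsum
    _ ≤ ∑' j, g (j + (k+1)) := by
        apply Summable.tsum_le_tsum _ hnormsum ((summable_nat_add_iff (k+1)).mpr hg_sum)
        intro j
        rw [norm_term]
        set i := j + (k+1) with hidef
        have h1 : as T (n+i) ≤ 2 * i := by
          have := as_add_le T k n i (by omega)
          omega
        have h1' : (as T (n+i) : ℝ) ≤ 2 * i := by exact_mod_cast h1
        have hfac : (0:ℝ) < (i ! : ℝ) := by exact_mod_cast Nat.factorial_pos i
        rw [hgdef]
        have h2 : ‖y‖^i ≤ R^i := pow_le_pow_left₀ (norm_nonneg y) hyR i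
        rw [div_le_div_iff₀ hfac hfac]
        have e1 : (as T (n+i) : ℝ) * ‖y‖^i ≤ (2 * i) * R^i := by
          apply mul_le_mul h1' h2 (by positivity) (by positivity)
        nlinarith
    _ < ε := hk₀ (k+1) (by omega)

lemma Fs_growth (phi : ℝ → ℝ) (hT : ∀ (k:ℕ) (r:ℝ), T k ≤ r → (k:ℝ) ≤ phi r) (r : ℝ)
    (hr1 : 1 ≤ r) (hrQ : (Qs T 3 : ℝ) ≤ r) (z : ℂ) (hz : ‖z‖ ≤ r) :
    ‖Fs T 0 z‖ ≤ phi r * Real.exp r := by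
  classical
  set P : ℕ → Prop := fun k => ((Qs T (2*k+1) : ℝ) ≤ 6*r) with hPdef
  set K := Nat.findGreatest P ⌈6*r⌉₊ with hKdef
  have hr0 : (0:ℝ) < r := lt_of_lt_of_le one_pos hr1
  have h6r : (1:ℝ) ≤ 6*r := by linarith
  have h1n : 1 ≤ ⌈6*r⌉₊ := Nat.one_le_ceil_iff.mpr (by linarith)
  have hP1 : P 1 := by
    show ((Qs T 3 : ℝ) ≤ 6*r)
    linarith
  have hPK : P K := Nat.findGreatest_spec h1n hP1
  have hQKr : (Qs T (2*K+1) : ℝ) ≤ 6*r := hPK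
  have hK1 : K + 1 ≤ ⌈6*r⌉₊ := by
    by_contra hc
    push_neg at hc
    have hKc' : ⌈6*r⌉₊ ≤ K := by omega
    have hKc : (⌈6*r⌉₊ : ℝ) ≤ K := by exact_mod_cast hKc'
    have h6K : (6*r : ℝ) ≤ K := le_trans (Nat.le_ceil _) hKc
    have hge : (2*K+2 : ℝ) ≤ (Qs T (2*K+1) : ℝ) := by exact_mod_cast Qs_ge T (2*K+1)
    have : (K:ℝ) ≥ 0 := by positivity
    linarith
  have hnP : ¬ P (K+1) := Nat.findGreatest_is_greatest (by omega) hK1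
  set M := Qs T (2*K+3) with hMdef
  have hM6r : 6*r < (M:ℝ) := by
    rw [hPdef] at hnP
    simp only [not_le] at hnP
    have : 2*(K+1)+1 = 2*K+3 := by omega
    rw [this] at hnP
    exact hnP
  have hM1 : 1 ≤ M := le_trans (by omega) (Qs_ge T (2*K+3))
  -- φ r ≥ K + 2
  have hphiK : ((K:ℝ) + 2) ≤ phi r := by
    have hTle : 6 * ⌈T (K+2)⌉₊ ≤ Qs T (2*K+1) := Qs_T_le T (2*K) (K+2) (by omega)
    have hTle' : (6:ℝ) * ⌈T (K+2)⌉₊ ≤ Qs T (2*K+1) := by exact_mod_cast hTle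
    have hceil : T (K+2) ≤ (⌈T (K+2)⌉₊ : ℝ) := Nat.le_ceil _
    have hTr : T (K+2) ≤ r := by
      have : (⌈T (K+2)⌉₊ : ℝ) ≤ r := by linarith
      linarith
    have := hT (K+2) r hTr
    push_cast at this ⊢
    linarith
  -- coefficient bound below M
  have hcoef : ∀ j < M, as T j ≤ K + 1 := by
    intro j hj
    by_cases h : as T j = 0
    · omega
    · obtain ⟨k', hk', h1, _⟩ := as_block T j h
      rcases le_or_gt k' K with hle | hlt
      · omega
      · exfalso
        have : Qs T (2*K+3) ≤ Qs T (2*k'+1) := Qs_mono T (by omega)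
        omega
  -- split
  have hsum := summable_norm_Fs T 0 z
  have hstep1 : ‖Fs T 0 z‖ ≤ ∑' j, ‖(as T (0+j) : ℂ) * z ^ j / (j ! : ℂ)‖ := by
    rw [Fs]
    exact norm_tsum_le_tsum_norm hsum
  rw [← Summable.sum_add_tsum_nat_add M hsum] at hstep1
  have hpart1 : (∑ j ∈ Finset.range M, ‖(as T (0+j) : ℂ) * z ^ j / (j ! : ℂ)‖)
      ≤ ((K:ℝ)+1) * Real.exp r := by
    have hterm : ∀ j ∈ Finset.range M, ‖(as T (0+j) : ℂ) * z ^ j / (j ! : ℂ)‖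
        ≤ ((K:ℝ)+1) * (r^j / j !) := by
      intro j hj
      rw [Finset.mem_range] at hj
      rw [norm_term]
      have h1 : (as T (0+j) : ℝ) ≤ (K:ℝ)+1 := by
        have := hcoef (0+j) (by omega)
        exact_mod_cast by push_cast; exact_mod_cast this
      have hfac : (0:ℝ) < (j ! : ℝ) := by exact_mod_cast Nat.factorial_pos j
      have h2 : ‖z‖^j ≤ r^j := pow_le_pow_left₀ (norm_nonneg z) hz j
      rw [div_le_iff₀ hfac]
      have e : ((K:ℝ)+1) * (r^j / j !) * j ! = ((K:ℝ)+1) * r^j := by field_simp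
      rw [e]
      exact mul_le_mul h1 h2 (by positivity) (by positivity)
    calc (∑ j ∈ Finset.range M, ‖(as T (0+j) : ℂ) * z ^ j / (j ! : ℂ)‖)
        ≤ ∑ j ∈ Finset.range M, ((K:ℝ)+1) * (r^j / j !) := Finset.sum_le_sum hterm
      _ = ((K:ℝ)+1) * ∑ j ∈ Finset.range M, (r^j / j !) := by rw [Finset.mul_sum]
      _ ≤ ((K:ℝ)+1) * Real.exp r := by
          apply mul_le_mul_of_nonneg_left _ (by positivity)
          rw [← exp_tsum]
          exact Summable.sum_le_tsum _ (fun j _ => by positivity) (Real.summable_pow_div_factorial r)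
  have hpart2 : (∑' j, ‖(as T (0+(j+M)) : ℂ) * z ^ (j+M) / ((j+M)! : ℂ)‖) ≤ Real.exp r := by
    have hsum2 : Summable (fun j => ((j+M : ℕ) : ℝ) * (1/2 : ℝ)^(j+M)) := by
      have := (summable_nat_add_iff (f := fun i : ℕ => (i:ℝ) * (1/2 : ℝ)^i) M).mpr
        summable_id_mul_half_pow
      exact this
    have hterm : ∀ j : ℕ, ‖(as T (0+(j+M)) : ℂ) * z ^ (j+M) / ((j+M)! : ℂ)‖
        ≤ ((j+M : ℕ) : ℝ) * (1/2 : ℝ)^(j+M) := by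
      intro j
      rw [norm_term]
      set i := j + M with hidef
      have h1 : (as T (0+i) : ℝ) ≤ (i : ℝ) := by
        have h := as_le_self T (0+i)
        have h' : as T (0+i) ≤ i := by omega
        exact_mod_cast h'
      have hfac : (0:ℝ) < (i ! : ℝ) := by exact_mod_cast Nat.factorial_pos i
      have h2 : ‖z‖^i ≤ r^i := pow_le_pow_left₀ (norm_nonneg z) hz i
      have h3 : r^i / i ! ≤ (1/2 : ℝ)^i := by
        apply tail_term_le r hr1 i
        have hMi : (M:ℝ) ≤ i := by exact_mod_cast Nat.le_add_left M j
        linarith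
      calc (as T (0+i) : ℝ) * ‖z‖^i / i ! ≤ (i:ℝ) * r^i / i ! := by
            gcongr
        _ = (i:ℝ) * (r^i / i !) := by ring
        _ ≤ (i:ℝ) * (1/2:ℝ)^i := by
            apply mul_le_mul_of_nonneg_left h3 (by positivity)
    have hle2 : (∑' j, ((j+M : ℕ) : ℝ) * (1/2 : ℝ)^(j+M)) ≤ 2 := by
      have hpartial : 0 ≤ ∑ i ∈ Finset.range M, (i:ℝ) * (1/2:ℝ)^i :=
        Finset.sum_nonneg (fun i _ => by positivity)
      have := Summable.sum_add_tsum_nat_add (f := fun i : ℕ => (i:ℝ) * (1/2:ℝ)^i) M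
        summable_id_mul_half_pow
      rw [tsum_id_mul_half_pow] at this
      push_cast at this ⊢
      linarith
    have h2exp : (2:ℝ) ≤ Real.exp r := by
      have := Real.add_one_le_exp r
      linarith
    calc (∑' j, ‖(as T (0+(j+M)) : ℂ) * z ^ (j+M) / ((j+M)! : ℂ)‖)
        ≤ ∑' j, ((j+M : ℕ) : ℝ) * (1/2 : ℝ)^(j+M) :=
          Summable.tsum_le_tsum hterm ((summable_nat_add_iff
            (f := fun j : ℕ => ‖(as T (0+j) : ℂ) * z ^ j / (j ! : ℂ)‖) M).mpr hsum) hsum2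
      _ ≤ 2 := hle2
      _ ≤ Real.exp r := h2exp
  have hfinal : ‖Fs T 0 z‖ ≤ ((K:ℝ)+2) * Real.exp r := by
    have := hstep1
    nlinarith [Real.exp_pos r]
  calc ‖Fs T 0 z‖ ≤ ((K:ℝ)+2) * Real.exp r := hfinal
    _ ≤ phi r * Real.exp r := by
        apply mul_le_mul_of_nonneg_right _ (Real.exp_pos r).le
        linarith


end DIAux

/-- The average `L^p`-norm of an entire function on the circle of radius `r`. -/
noncomputable def Mp (p : ℝ) (f : ℂ → ℂ) (r : ℝ) : ℝ :=
  ((1 / (2 * Real.pi)) * ∫ t in (0 : ℝ)..(2 * Real.pi),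
    ‖f (r * Complex.exp (Complex.I * t))‖ ^ p) ^ (1 / p)

/-- `f` is a distributionally irregular vector for the differentiation operator `D`
on `H(ℂ)`: along a set of upper density one the iterated derivatives tend to `0`
locally uniformly, and along a set of upper density one some sup-seminorm of the
iterated derivatives tends to infinity. -/
def DDistIrregular (f : ℂ → ℂ) : Prop :=
  (∃ A : Set ℕ, udens A = 1 ∧
    TendstoLocallyUniformly (fun (n : ℕ) (z : ℂ) => iteratedDeriv n f z) (fun _ => 0)
      (atTop ⊓ 𝓟 A)) ∧
  (∃ m : ℕ, ∃ B : Set ℕ, udens B = 1 ∧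
    Tendsto (fun n : ℕ =>
        sSup ((fun z => ‖iteratedDeriv n f z‖) '' Metric.closedBall (0 : ℂ) m))
      (atTop ⊓ 𝓟 B) atTop)


/-- The sup-norm of an entire function on the circle of radius `r`. -/
noncomputable def Minf (f : ℂ → ℂ) (r : ℝ) : ℝ :=
  sSup ((fun z => ‖f z‖) '' Metric.sphere (0 : ℂ) r)

theorem stmt3 (φ : ℝ → ℝ) (hφpos : ∀ r > (0 : ℝ), 0 < φ r) (hφ : Tendsto φ atTop atTop) :
    ∃ f : ℂ → ℂ, Differentiable ℂ f ∧ DDistIrregular f ∧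
      ∀ᶠ r in atTop, Minf f r ≤ φ r * Real.exp r := by
  have h1 : ∀ k : ℕ, ∃ x : ℝ, ∀ r ≥ x, (k:ℝ) ≤ φ r :=
    fun k => eventually_atTop.mp (hφ.eventually_ge_atTop (k:ℝ))
  choose T hT using h1
  refine ⟨Fs T 0, differentiable_Fs T 0, ⟨?_, ?_⟩, ?_⟩
  · -- derivatives tend to 0 locally uniformly along a density-one set
    refine ⟨⋃ k, Set.Icc (Qs T (2*k)) (Qs T (2*k+1) - (k+1)), ?_, ?_⟩
    · apply udens_eq_one
      intro K N
      set k := K + N + 1 with hk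
      refine ⟨Qs T (2*k), Qs T (2*k+1) - (k+1), ?_, ?_, ?_, ?_⟩
      · -- N ≤ n
        have e1 := Qs_succ_ge T (2*k)
        have e2 := Qs_ge T (2*k)
        omega
      · have := Qs_ge T (2*k); omega
      · -- (K+1) * m ≤ n
        apply Nat.le_sub_of_add_le
        have e1 : (K+1) * Qs T (2*k) ≤ (2*k+1) * Qs T (2*k) :=
          Nat.mul_le_mul_right _ (by omega)
        have e2 : (2*k+1) * Qs T (2*k) + (Qs T (2*k) + (2*k+2)) =
            (2*k+2) * (Qs T (2*k) + 1) := by ring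
        have e3 := Qs_mul_le T (2*k)
        have e4 := Qs_ge T (2*k)
        linarith
      · exact Set.subset_iUnion
          (fun k => Set.Icc (Qs T (2*k)) (Qs T (2*k+1) - (k+1))) k
    · have heq : (fun (n : ℕ) (z : ℂ) => iteratedDeriv n (Fs T 0) z)
          = fun (n : ℕ) (z : ℂ) => Fs T n z := by
        funext n z
        rw [iteratedDeriv_Fs]
      rw [heq]
      exact tendstoLU T
  · -- blow-up along a density-one set
    refine ⟨1, ⋃ k, Set.Icc (Qs T (2*k+1)) (Qs T (2*k+2) - 1), ?_, ?_⟩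
    · apply udens_eq_one
      intro K N
      set k := K + N + 1 with hk
      refine ⟨Qs T (2*k+1), Qs T (2*k+2) - 1, ?_, ?_, ?_, ?_⟩
      · have e1 : Qs T (2*k+1) + (2*k+1) + 2 ≤ Qs T (2*k+2) := Qs_succ_ge T (2*k+1)
        have e2 := Qs_ge T (2*k+1)
        omega
      · have := Qs_ge T (2*k+1); omega
      · apply Nat.le_sub_of_add_le
        have e1 : (K+1) * Qs T (2*k+1) ≤ (2*k+3) * Qs T (2*k+1) :=
          Nat.mul_le_mul_right _ (by omega)
        have e2 : (2*k+3) * Qs T (2*k+1) + (2*k+3) = (2*k+3) * (Qs T (2*k+1) + 1) := by ring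
        have e3 : (2*k+3) * (Qs T (2*k+1) + 1) ≤ Qs T (2*k+2) := Qs_mul_le T (2*k+1)
        linarith
      · exact Set.subset_iUnion
          (fun k => Set.Icc (Qs T (2*k+1)) (Qs T (2*k+2) - 1)) k
    · rw [Filter.tendsto_atTop]
      intro b
      rw [eventually_inf_principal]
      set C := ⌈max b 0⌉₊ with hC
      filter_upwards [eventually_ge_atTop (Qs T (2*C+2))] with n hn hnB
      obtain ⟨s, ⟨k, rfl⟩, hs⟩ := hnB
      rw [Set.mem_Icc] at hs
      have hQpos : 1 ≤ Qs T (2*k+2) := le_trans (by omega) (Qs_ge T (2*k+2))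
      have hnlt : n < Qs T (2*k+2) := by omega
      have hasn : as T n = k + 1 := as_eq T k n hs.1 hnlt
      have hCk : C ≤ k := by
        by_contra hc
        push_neg at hc
        have : Qs T (2*k+2) ≤ Qs T (2*C+2) := Qs_mono T (by omega)
        omega
      have hbC : b ≤ (C:ℝ) := le_trans (le_max_left b 0) (Nat.le_ceil _)
      have h0mem : (0:ℂ) ∈ Metric.closedBall (0:ℂ) (1:ℕ) := by
        simp
      have hBdd : BddAbove ((fun z => ‖iteratedDeriv n (Fs T 0) z‖) ''
          Metric.closedBall (0:ℂ) (1:ℕ)) := by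
        have heq : (fun z => ‖iteratedDeriv n (Fs T 0) z‖)
            = fun z => ‖Fs T n z‖ := by
          rw [iteratedDeriv_Fs]
        rw [heq]
        exact (isCompact_closedBall (0:ℂ) (1:ℕ)).bddAbove_image
          ((continuous_norm.comp (differentiable_Fs T n).continuous).continuousOn)
      have h0val : ‖iteratedDeriv n (Fs T 0) 0‖ = (as T n : ℝ) := by
        rw [iteratedDeriv_Fs, Fs_apply_zero, Complex.norm_natCast]
      calc b ≤ (C:ℝ) := hbC
        _ ≤ ((k+1 : ℕ):ℝ) := by exact_mod_cast Nat.le_succ_of_le hCk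
        _ = (as T n : ℝ) := by rw [hasn]
        _ = ‖iteratedDeriv n (Fs T 0) 0‖ := h0val.symm
        _ ≤ sSup ((fun z => ‖iteratedDeriv n (Fs T 0) z‖) ''
              Metric.closedBall (0:ℂ) (1:ℕ)) :=
            le_csSup hBdd ⟨0, h0mem, rfl⟩
  · -- growth estimate
    rw [eventually_atTop]
    refine ⟨max 1 ((Qs T 3 : ℕ) : ℝ), fun r hr => ?_⟩
    have hr1 : (1:ℝ) ≤ r := le_trans (le_max_left _ _) hr
    have hrQ : ((Qs T 3 : ℕ) : ℝ) ≤ r := le_trans (le_max_right _ _) hr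
    apply Real.sSup_le
    · rintro x ⟨z, hz, rfl⟩
      rw [mem_sphere_zero_iff_norm] at hz
      have hgrow := Fs_growth T φ (fun k r hkr => hT k r hkr) r hr1 hrQ z (le_of_eq hz)
      calc ‖Fs T 0 z‖ = ‖Fs T 0 z‖ := rfl
        _ ≤ φ r * Real.exp r := hgrow
    · have hφr : 0 < φ r := hφpos r (lt_of_lt_of_le one_pos hr1)
      positivity
end

section
/- Let X be a Banach space, T : X → X a bounded linear operator, and x ∈ X a vector whose T-orbit is distributionally unbounded, i.e. there exists B ⊂ ℕ with udens(B) = 1 such that ‖T^n x‖ → ∞ along n ∈ B. Then limsup_{N→∞} (1/N) ∑_{j=0}^N ‖T^j x‖ = ∞. In particular, an absolutely Cesàro bounded operator admits no vector with distributionally unbounded orbit. -/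
open Filter

lemma stmt17_aux (X : Type*) [NormedAddCommGroup X]
    (T : X → X) (x : X) (B : Set ℕ) (hB : udens B = 1)
    (hT : Tendsto (fun n : ℕ => ‖T^[n] x‖) (atTop ⊓ 𝓟 B) atTop)
    (M : ℝ) :
    ∃ᶠ N : ℕ in atTop,
      M ≤ (N : ℝ)⁻¹ * ∑ j ∈ Finset.range (N + 1), ‖T^[j] x‖ := by
  classical
  set c : ℝ := |M| + 1 with hc
  have hc0 : 0 < c := by positivity
  have hMc : M ≤ c := le_trans (le_abs_self M) (by linarith)
  -- threshold from the tendsto hypothesis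
  have hev : ∀ᶠ n in (atTop : Filter ℕ), n ∈ B → 4 * c ≤ ‖T^[n] x‖ := by
    have := hT.eventually_ge_atTop (4 * c)
    rwa [eventually_inf_principal] at this
  obtain ⟨N₀, hN₀⟩ := eventually_atTop.mp hev
  -- frequently the density exceeds 1/2
  have hfreq : ∃ᶠ n in (atTop : Filter ℕ),
      (1 : ℝ) / 2 < ((B ∩ Set.Icc 1 n).ncard : ℝ) / n := by
    apply frequently_lt_of_lt_limsup
    · exact isCoboundedUnder_le_of_le atTop (x := 0) (fun n => by positivity)
    · rw [show Filter.limsup (fun n : ℕ => ((B ∩ Set.Icc 1 n).ncard : ℝ) / n) Filter.atTop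
          = udens B from rfl, hB]; norm_num
  rw [frequently_atTop] at hfreq ⊢
  intro a
  obtain ⟨n, hn, hdens⟩ := hfreq (max a (4 * N₀ + 4))
  have hna : a ≤ n := le_trans (le_max_left _ _) hn
  have hn4 : 4 * N₀ + 4 ≤ n := le_trans (le_max_right _ _) hn
  have hn1 : 1 ≤ n := by omega
  have hnR : (0 : ℝ) < n := by exact_mod_cast Nat.lt_of_lt_of_le Nat.zero_lt_one hn1
  refine ⟨n, hna, ?_⟩
  -- Finset versions
  set G : Finset ℕ := (Finset.Icc 1 n).filter (· ∈ B) with hG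
  set F : Finset ℕ := (Finset.Icc 1 n).filter (fun j => j ∈ B ∧ N₀ ≤ j) with hF
  have hGcard : (B ∩ Set.Icc 1 n).ncard = G.card := by
    have : B ∩ Set.Icc 1 n = (G : Set ℕ) := by
      ext j
      simp only [hG, Finset.coe_filter, Finset.mem_Icc, Set.mem_setOf_eq, Set.mem_inter_iff,
        Set.mem_Icc]
      tauto
    rw [this, Set.ncard_coe_finset]
  -- G.card ≤ F.card + N₀
  have hsub : G \ F ⊆ Finset.Ico 0 N₀ := by
    intro j hj
    rw [Finset.mem_sdiff] at hj
    obtain ⟨hjG, hjF⟩ := hj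
    rw [hG, Finset.mem_filter] at hjG
    simp only [Finset.mem_Ico]
    refine ⟨Nat.zero_le _, ?_⟩
    by_contra hge
    push_neg at hge
    exact hjF (by rw [hF, Finset.mem_filter]; exact ⟨hjG.1, hjG.2, hge⟩)
  have hcard : G.card ≤ F.card + N₀ := by
    have h1 : (G \ F).card ≤ N₀ := by
      calc (G \ F).card ≤ (Finset.Ico 0 N₀).card := Finset.card_le_card hsub
        _ = N₀ := by simp
    have h2 := Finset.card_le_card_sdiff_add_card (s := G) (t := F)
    omega
  -- F.card real bound
  have hGn : (n : ℝ) / 2 < (G.card : ℝ) := by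
    rw [hGcard] at hdens
    rw [div_lt_div_iff₀ (by norm_num) hnR] at hdens
    linarith
  have hFn : (n : ℝ) / 4 ≤ (F.card : ℝ) := by
    have hcR : (G.card : ℝ) ≤ (F.card : ℝ) + N₀ := by exact_mod_cast hcard
    have hN0n : (4 : ℝ) * N₀ + 4 ≤ n := by exact_mod_cast hn4
    linarith
  -- sum bound
  have hFsub : F ⊆ Finset.range (n + 1) := by
    intro j hj
    simp only [hF, Finset.mem_filter, Finset.mem_Icc] at hj
    simp only [Finset.mem_range]
    omega
  have hsum1 : ∑ j ∈ F, ‖T^[j] x‖ ≤ ∑ j ∈ Finset.range (n + 1), ‖T^[j] x‖ :=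
    Finset.sum_le_sum_of_subset_of_nonneg hFsub (fun j _ _ => norm_nonneg _)
  have hsum2 : (F.card : ℝ) * (4 * c) ≤ ∑ j ∈ F, ‖T^[j] x‖ := by
    have := Finset.card_nsmul_le_sum F (fun j => ‖T^[j] x‖) (4 * c) (fun j hj => by
      simp only [hF, Finset.mem_filter, Finset.mem_Icc] at hj
      exact hN₀ j hj.2.2 hj.2.1)
    rwa [nsmul_eq_mul] at this
  have hkey : (n : ℝ) * c ≤ ∑ j ∈ Finset.range (n + 1), ‖T^[j] x‖ := by
    calc (n : ℝ) * c = ((n : ℝ) / 4) * (4 * c) := by ring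
      _ ≤ (F.card : ℝ) * (4 * c) := by
          apply mul_le_mul_of_nonneg_right hFn (by positivity)
      _ ≤ _ := le_trans hsum2 hsum1
  calc M ≤ c := hMc
    _ = (n : ℝ)⁻¹ * ((n : ℝ) * c) := by field_simp
    _ ≤ (n : ℝ)⁻¹ * ∑ j ∈ Finset.range (n + 1), ‖T^[j] x‖ := by
        apply mul_le_mul_of_nonneg_left hkey (by positivity)

/-- a vector with distributionally unbounded orbit has Cesàro
averages of the orbit norms with limsup infinity; in particular the operator is
not absolutely Cesàro bounded. -/
theorem stmt17 (X : Type*) [NormedAddCommGroup X] [NormedSpace ℝ X] [CompleteSpace X]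
    (T : X →L[ℝ] X) (x : X)
    (hx : ∃ B : Set ℕ, udens B = 1 ∧
      Tendsto (fun n : ℕ => ‖(⇑T)^[n] x‖) (atTop ⊓ 𝓟 B) atTop) :
    Filter.limsup
        (fun N : ℕ =>
          (((N : ℝ)⁻¹ * ∑ j ∈ Finset.range (N + 1), ‖(⇑T)^[j] x‖ : ℝ) : EReal))
        atTop = ⊤ ∧
      ¬ ∃ C : ℝ, 0 < C ∧ ∀ y : X, ∀ n : ℕ, 0 < n →
        (1 / (n : ℝ)) * ∑ j ∈ Finset.Icc 1 n, ‖(⇑T)^[j] y‖ ≤ C * ‖y‖ := by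
  obtain ⟨B, hB, hT⟩ := hx
  have htop : Filter.limsup
      (fun N : ℕ =>
        (((N : ℝ)⁻¹ * ∑ j ∈ Finset.range (N + 1), ‖(⇑T)^[j] x‖ : ℝ) : EReal))
      atTop = ⊤ := by
    rw [EReal.eq_top_iff_forall_lt]
    intro y
    have hfreq := stmt17_aux X (⇑T) x B hB hT (y + 1)
    have : ((y : EReal) + 1) ≤ Filter.limsup
        (fun N : ℕ =>
          (((N : ℝ)⁻¹ * ∑ j ∈ Finset.range (N + 1), ‖(⇑T)^[j] x‖ : ℝ) : EReal))
        atTop := by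
      apply le_limsup_of_frequently_le'
      apply hfreq.mono
      intro N hN
      have : ((y + 1 : ℝ) : EReal) ≤ _ := EReal.coe_le_coe_iff.mpr hN
      simpa using this
    refine lt_of_lt_of_le ?_ this
    have : (y : EReal) < (y : EReal) + 1 := by
      rw [show ((y : EReal) + 1) = ((y + 1 : ℝ) : EReal) by norm_cast]
      exact_mod_cast (by linarith : y < y + 1)
    exact this
  refine ⟨htop, ?_⟩
  rintro ⟨C, hC, h⟩
  -- bounded averages contradict the limsup being ⊤
  have hbd : ∀ᶠ N : ℕ in atTop,
      (((N : ℝ)⁻¹ * ∑ j ∈ Finset.range (N + 1), ‖(⇑T)^[j] x‖ : ℝ) : EReal)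
        ≤ ((‖x‖ + C * ‖x‖ : ℝ) : EReal) := by
    filter_upwards [eventually_ge_atTop 1] with N hN
    rw [EReal.coe_le_coe_iff]
    have hNR : (0 : ℝ) < N := by exact_mod_cast Nat.lt_of_lt_of_le Nat.zero_lt_one hN
    have hsplit : ∑ j ∈ Finset.range (N + 1), ‖(⇑T)^[j] x‖
        = ‖x‖ + ∑ j ∈ Finset.Icc 1 N, ‖(⇑T)^[j] x‖ := by
      rw [Finset.range_eq_Ico, Finset.sum_eq_sum_Ico_succ_bot (by omega), Finset.Ico_add_one_right_eq_Icc]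
      simp
    rw [hsplit, mul_add]
    have h1 : (N : ℝ)⁻¹ * ‖x‖ ≤ ‖x‖ := by
      have : (N : ℝ)⁻¹ ≤ 1 := by
        rw [inv_le_one_iff₀]; right; exact_mod_cast hN
      nlinarith [norm_nonneg x]
    have h2 : (N : ℝ)⁻¹ * ∑ j ∈ Finset.Icc 1 N, ‖(⇑T)^[j] x‖ ≤ C * ‖x‖ := by
      have := h x N (by omega)
      rwa [one_div] at this
    linarith
  have : Filter.limsup
      (fun N : ℕ =>
        (((N : ℝ)⁻¹ * ∑ j ∈ Finset.range (N + 1), ‖(⇑T)^[j] x‖ : ℝ) : EReal))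
      atTop ≤ ((‖x‖ + C * ‖x‖ : ℝ) : EReal) := limsup_le_of_le (by isBoundedDefault) hbd
  rw [htop] at this
  exact EReal.coe_ne_top _ (top_le_iff.mp this)
end
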